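/- Let k ≥ 1, let G be a finite connected simple graph that is (P3+kP2)-free, and let A be a set of vertices of G such that the subgraph of G induced by A is isomorphic to P3+(k-1)P2. Let B be the set of vertices of G at distance exactly one from A and let C be the set of vertices at distance exactly two from A. Then A, B and C partition the vertex set of G (every vertex of G is at distance at most two from A), and C is a stable set. -/

import Mathlib

open SimpleGraph

/-- The disjoint union of a path `P₃` and `k` copies of `P₂`. -/
def P3kP2 (k : ℕ) : SimpleGraph (Fin 3 ⊕ Fin k × Fin 2) :=
  SimpleGraph.fromRel fun x y =>
    match x, y with
    | Sum.inl a, Sum.inl b => (b : ℕ) = (a : ℕ) + 1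
    | Sum.inr a, Sum.inr b => a.1 = b.1 ∧ a.2 ≠ b.2
    | _, _ => False

/-- `G` contains no induced subgraph isomorphic to `H`. -/
def HFree {V W : Type*} (G : SimpleGraph V) (H : SimpleGraph W) : Prop :=
  IsEmpty (H ↪g G)

/-- `D` is a dominating set of `G`. -/
def IsDomSet {V : Type*} (G : SimpleGraph V) (D : Set V) : Prop :=
  ∀ v ∉ D, ∃ u ∈ D, G.Adj u v

/-- `D` is a minimum dominating set of `G`. -/
def IsMinDomSet {V : Type*} (G : SimpleGraph V) (D : Set V) : Prop :=
  IsDomSet G D ∧ ∀ D' : Set V, IsDomSet G D' → D.ncard ≤ D'.ncard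

/-- The distance from a vertex `v` to a set `A` of vertices. -/
noncomputable def distToSet {V : Type*} (G : SimpleGraph V) (v : V) (A : Set V) : ℕ :=
  sInf ((G.dist v) '' A)

/-- The set of vertices at distance two from `A` whose open neighbourhood is a clique. -/
def cliqueDistTwo {V : Type*} (G : SimpleGraph V) (A : Set V) : Set V :=
  {v | distToSet G v A = 2 ∧ G.IsClique (G.neighborSet v)}

/-- A vertex `c₁` is regular (w.r.t. `A` and `k`) if `c₁ ∈ 𝒞` and there are `k` further
vertices of `𝒞` such that all `k+1` of them are pairwise at distance at least four. -/
def IsRegularVertex {V : Type*} (G : SimpleGraph V) (k : ℕ) (A : Set V) (c₁ : V) : Prop :=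
  c₁ ∈ cliqueDistTwo G A ∧ ∃ c : Fin k → V, (∀ i, c i ∈ cliqueDistTwo G A) ∧
    (∀ i, 4 ≤ G.dist c₁ (c i)) ∧ ∀ i j, i ≠ j → 4 ≤ G.dist (c i) (c j)

/-- `v` is a private neighbour of `u` with respect to the dominating set `D`:
`N[v] ∩ D = {u}`. -/
def IsPrivateNbr {V : Type*} (G : SimpleGraph V) (D : Set V) (u v : V) : Prop :=
  (insert v (G.neighborSet v)) ∩ D = {u}

/-- A stable (independent) set of vertices. -/
def IsStable {V : Type*} (G : SimpleGraph V) (S : Set V) : Prop :=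
  S.Pairwise fun u v => ¬ G.Adj u v

lemma keylem {V : Type*} {k : ℕ} (hk : 1 ≤ k) {G : SimpleGraph V}
    (f : P3kP2 (k-1) ↪g G) (u v : V) (huv : G.Adj u v)
    (hu : ∀ x, ¬ G.Adj u (f x)) (hv : ∀ x, ¬ G.Adj v (f x))
    (hur : ∀ x, f x ≠ u) (hvr : ∀ x, f x ≠ v) :
    ¬ HFree G (P3kP2 k) := by
  intro hfree
  have hne : u ≠ v := huv.ne
  set φ : Fin 3 ⊕ Fin k × Fin 2 → V := fun x =>
    match x with
    | Sum.inl a => f (Sum.inl a)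
    | Sum.inr (i, j) =>
      if h : (i : ℕ) < k - 1 then f (Sum.inr (⟨i, h⟩, j))
      else if j = 0 then u else v
    with hφ
  have hφinl : ∀ a, φ (Sum.inl a) = f (Sum.inl a) := fun a => rfl
  have hφlt : ∀ (i : Fin k) (j : Fin 2) (h : (i : ℕ) < k - 1),
      φ (Sum.inr (i, j)) = f (Sum.inr (⟨i, h⟩, j)) := by
    intro i j h; simp [hφ, h]
  have hφge : ∀ (i : Fin k) (j : Fin 2), ¬ ((i : ℕ) < k - 1) →
      φ (Sum.inr (i, j)) = if j = 0 then u else v := by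
    intro i j h; simp [hφ, h]
  have hite : ∀ j : Fin 2, (if j = 0 then u else v) = u ∨ (if j = 0 then u else v) = v := by
    intro j; split <;> simp
  have hinj : Function.Injective φ := by
    rintro (a | ⟨i, j⟩) (b | ⟨i', j'⟩) hxy
    · rw [hφinl, hφinl] at hxy
      simpa using f.injective hxy
    · exfalso
      rw [hφinl] at hxy
      by_cases h : (i' : ℕ) < k - 1
      · rw [hφlt i' j' h] at hxy
        exact absurd (f.injective hxy) (by simp)
      · rw [hφge i' j' h] at hxy
        rcases hite j' with hr | hr <;> rw [hr] at hxy
        · exact hur _ hxy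
        · exact hvr _ hxy
    · exfalso
      rw [hφinl] at hxy
      by_cases h : (i : ℕ) < k - 1
      · rw [hφlt i j h] at hxy
        exact absurd (f.injective hxy) (by simp)
      · rw [hφge i j h] at hxy
        rcases hite j with hr | hr <;> rw [hr] at hxy
        · exact hur _ hxy.symm
        · exact hvr _ hxy.symm
    · by_cases h : (i : ℕ) < k - 1 <;> by_cases h' : (i' : ℕ) < k - 1
      · rw [hφlt i j h, hφlt i' j' h'] at hxy
        have := f.injective hxy
        simp only [Sum.inr.injEq, Prod.mk.injEq, Fin.mk.injEq] at this
        simp [Prod.ext_iff, Fin.ext_iff, this.1, this.2]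
      · exfalso
        rw [hφlt i j h, hφge i' j' h'] at hxy
        rcases hite j' with hr | hr <;> rw [hr] at hxy
        · exact hur _ hxy
        · exact hvr _ hxy
      · exfalso
        rw [hφge i j h, hφlt i' j' h'] at hxy
        rcases hite j with hr | hr <;> rw [hr] at hxy
        · exact hur _ hxy.symm
        · exact hvr _ hxy.symm
      · rw [hφge i j h, hφge i' j' h'] at hxy
        have hi : (i : ℕ) = k - 1 := le_antisymm (by omega) (by omega)
        have hi' : (i' : ℕ) = k - 1 := le_antisymm (by omega) (by omega)
        have hjj : j = j' := by
          by_contra hjj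
          fin_cases j <;> fin_cases j' <;> simp at hxy <;>
            first
            | exact hjj rfl
            | exact hne hxy
            | exact hne hxy.symm
        simp [Prod.ext_iff, Fin.ext_iff, hi, hi', hjj]
  have hmap : ∀ x y, G.Adj (φ x) (φ y) ↔ (P3kP2 k).Adj x y := by
    rintro (a | ⟨i, j⟩) (b | ⟨i', j'⟩)
    · rw [show φ (Sum.inl a) = f (Sum.inl a) from rfl,
        show φ (Sum.inl b) = f (Sum.inl b) from rfl, f.map_adj_iff]
      simp [P3kP2, fromRel_adj]
    · constructor
      · intro hadj
        exfalso
        rw [show φ (Sum.inl a) = f (Sum.inl a) from rfl] at hadj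
        by_cases h : (i' : ℕ) < k - 1
        · rw [show φ (Sum.inr (i', j')) = f (Sum.inr (⟨i', h⟩, j')) from (by simp [hφ, h])] at hadj
          rw [f.map_adj_iff] at hadj
          simp [P3kP2, fromRel_adj] at hadj
        · rw [show φ (Sum.inr (i', j')) = (if j' = 0 then u else v) from (by simp [hφ, h])] at hadj
          rcases hite j' with hr | hr <;> rw [hr] at hadj
          · exact hu _ hadj.symm
          · exact hv _ hadj.symm
      · intro hadj; exfalso; simp [P3kP2, fromRel_adj] at hadj
    · constructor
      · intro hadj
        exfalso
        rw [show φ (Sum.inl b) = f (Sum.inl b) from rfl] at hadj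
        by_cases h : (i : ℕ) < k - 1
        · rw [show φ (Sum.inr (i, j)) = f (Sum.inr (⟨i, h⟩, j)) from (by simp [hφ, h])] at hadj
          rw [f.map_adj_iff] at hadj
          simp [P3kP2, fromRel_adj] at hadj
        · rw [show φ (Sum.inr (i, j)) = (if j = 0 then u else v) from (by simp [hφ, h])] at hadj
          rcases hite j with hr | hr <;> rw [hr] at hadj
          · exact hu _ hadj
          · exact hv _ hadj
      · intro hadj; exfalso; simp [P3kP2, fromRel_adj] at hadj
    · by_cases h : (i : ℕ) < k - 1 <;> by_cases h' : (i' : ℕ) < k - 1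
      · rw [show φ (Sum.inr (i, j)) = f (Sum.inr (⟨i, h⟩, j)) from (by simp [hφ, h]),
          show φ (Sum.inr (i', j')) = f (Sum.inr (⟨i', h'⟩, j')) from (by simp [hφ, h']),
          f.map_adj_iff]
        simp only [P3kP2, fromRel_adj]
        constructor
        · rintro ⟨hne2, hrel⟩
          refine ⟨?_, ?_⟩
          · intro hc; apply hne2; simp_all
          · simpa [Fin.ext_iff] using hrel
        · rintro ⟨hne2, hrel⟩
          refine ⟨?_, ?_⟩
          · intro hc
            apply hne2
            simp only [Sum.inr.injEq, Prod.mk.injEq, Fin.mk.injEq] at hc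
            simp [Prod.ext_iff, Fin.ext_iff, hc.1, hc.2]
          · simpa [Fin.ext_iff] using hrel
      · rw [show φ (Sum.inr (i, j)) = f (Sum.inr (⟨i, h⟩, j)) from (by simp [hφ, h]),
          show φ (Sum.inr (i', j')) = (if j' = 0 then u else v) from (by simp [hφ, h'])]
        constructor
        · intro hadj
          exfalso
          rcases hite j' with hr | hr <;> rw [hr] at hadj
          · exact hu _ hadj.symm
          · exact hv _ hadj.symm
        · intro hadj
          exfalso
          simp only [P3kP2, fromRel_adj] at hadj
          obtain ⟨-, hrel⟩ := hadj
          have : i = i' := by rcases hrel with ⟨h1, -⟩ | ⟨h1, -⟩ <;> simp [h1]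
          rw [this] at h
          exact h' h
      · rw [show φ (Sum.inr (i, j)) = (if j = 0 then u else v) from (by simp [hφ, h]),
          show φ (Sum.inr (i', j')) = f (Sum.inr (⟨i', h'⟩, j')) from (by simp [hφ, h'])]
        constructor
        · intro hadj
          exfalso
          rcases hite j with hr | hr <;> rw [hr] at hadj
          · exact hu _ hadj
          · exact hv _ hadj
        · intro hadj
          exfalso
          simp only [P3kP2, fromRel_adj] at hadj
          obtain ⟨-, hrel⟩ := hadj
          have : i = i' := by rcases hrel with ⟨h1, -⟩ | ⟨h1, -⟩ <;> simp [h1]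
          rw [this] at h
          exact h h'
      · have hi : (i : ℕ) = k - 1 := le_antisymm (by omega) (by omega)
        have hi' : (i' : ℕ) = k - 1 := le_antisymm (by omega) (by omega)
        have hii : i = i' := Fin.ext (by omega)
        rw [show φ (Sum.inr (i, j)) = (if j = 0 then u else v) from (by simp [hφ, h]),
          show φ (Sum.inr (i', j')) = (if j' = 0 then u else v) from (by simp [hφ, h'])]
        subst hii
        by_cases hjj : j = j'
        · subst hjj
          simp only [P3kP2, fromRel_adj]
          constructor
          · intro hadj; exact absurd rfl hadj.ne
          · rintro ⟨hne2, -⟩; exact absurd rfl hne2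
        · have : (if j = 0 then u else v) ≠ (if j' = 0 then u else v) ∧
              G.Adj (if j = 0 then u else v) (if j' = 0 then u else v) := by
            fin_cases j <;> fin_cases j' <;> simp <;>
              first
              | exact absurd rfl hjj
              | exact ⟨hne, huv⟩
              | exact ⟨fun hh => hne hh.symm, huv.symm⟩
          simp only [P3kP2, fromRel_adj]
          constructor
          · intro hadj
            exact ⟨by simp [hjj], Or.inl ⟨by trivial, hjj⟩⟩
          · rintro -
            exact this.2
  exact hfree.false ⟨⟨φ, hinj⟩, hmap _ _⟩

theorem stmt1
    {V : Type*} [Fintype V] (k : ℕ) (hk : 1 ≤ k) (G : SimpleGraph V)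
    (hconn : G.Connected) (hfree : HFree G (P3kP2 k))
    (A : Set V) (hA : ∃ f : P3kP2 (k-1) ↪g G, Set.range f = A)
    (B C : Set V) (hB : B = {v | distToSet G v A = 1})
    (hC : C = {v | distToSet G v A = 2}) :
    (∀ v : V, v ∈ A ∨ v ∈ B ∨ v ∈ C) ∧ Disjoint A B ∧ Disjoint A C ∧ Disjoint B C ∧
      IsStable G C := by
  obtain ⟨f, hfA⟩ := hA
  have hAne : A.Nonempty := by
    rw [← hfA]; exact ⟨f (Sum.inl 0), Set.mem_range_self _⟩
  -- basic facts about d := distToSet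
  have himne : ∀ v : V, ((G.dist v) '' A).Nonempty := fun v => hAne.image _
  have hle : ∀ v : V, ∀ a ∈ A, distToSet G v A ≤ G.dist v a := by
    intro v a ha
    exact Nat.sInf_le ⟨a, ha, rfl⟩
  have hex : ∀ v : V, ∃ a ∈ A, G.dist v a = distToSet G v A := by
    intro v
    have := Nat.sInf_mem (himne v)
    obtain ⟨a, ha, hda⟩ := this
    exact ⟨a, ha, hda⟩
  have hmemA : ∀ v ∈ A, distToSet G v A = 0 := by
    intro v hv
    have h0 : G.dist v v = 0 := SimpleGraph.dist_self
    have := hle v v hv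
    omega
  have hA0 : ∀ v : V, distToSet G v A = 0 → v ∈ A := by
    intro v h0
    obtain ⟨a, ha, hda⟩ := hex v
    rw [h0] at hda
    rwa [(hconn.dist_eq_zero_iff).mp hda]
  -- vertices far from A are non-adjacent to A
  have hfar : ∀ v : V, 2 ≤ distToSet G v A → ∀ a ∈ A, ¬ G.Adj v a := by
    intro v h2 a ha hadj
    have : G.dist v a = 1 := SimpleGraph.dist_eq_one_iff_adj.mpr hadj
    have := hle v a ha
    omega
  -- key: no edge between two vertices both at distToSet ≥ 2
  have hkey : ∀ u v : V, G.Adj u v → 2 ≤ distToSet G u A → 2 ≤ distToSet G v A → False := by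
    intro u v hadj h2u h2v
    have hu' : ∀ x, ¬ G.Adj u (f x) := by
      intro x hc
      exact hfar u h2u (f x) (hfA ▸ Set.mem_range_self x) hc
    have hv' : ∀ x, ¬ G.Adj v (f x) := by
      intro x hc
      exact hfar v h2v (f x) (hfA ▸ Set.mem_range_self x) hc
    have hur : ∀ x, f x ≠ u := by
      intro x hc
      have : u ∈ A := hfA ▸ (hc ▸ Set.mem_range_self x)
      have := hmemA u this; omega
    have hvr : ∀ x, f x ≠ v := by
      intro x hc
      have : v ∈ A := hfA ▸ (hc ▸ Set.mem_range_self x)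
      have := hmemA v this; omega
    exact keylem hk f u v hadj hu' hv' hur hvr hfree
  -- every vertex is at distance ≤ 2
  have hbound : ∀ v : V, distToSet G v A ≤ 2 := by
    by_contra hcon
    push_neg at hcon
    obtain ⟨v₀, hv₀⟩ := hcon
    set S : Set ℕ := {n | 3 ≤ n ∧ ∃ v : V, distToSet G v A = n} with hS
    have hSne : S.Nonempty := ⟨distToSet G v₀ A, by omega, v₀, rfl⟩
    obtain ⟨hm3, v, hvm⟩ := Nat.sInf_mem hSne
    set m := sInf S
    obtain ⟨a, ha, hda⟩ := hex v
    rw [hvm] at hda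
    have hdvne : G.dist v a ≠ 0 := by omega
    obtain ⟨p, hp⟩ := SimpleGraph.exists_walk_of_dist_ne_zero hdvne
    cases p with
    | nil => simp at hp; rw [SimpleGraph.dist_self] at hda; omega
    | cons hadj q =>
      rename_i w
      have hqlen : q.length = m - 1 := by
        simp [SimpleGraph.Walk.length_cons, hda] at hp
        omega
      have hdw : G.dist w a ≤ m - 1 := hqlen ▸ SimpleGraph.dist_le q
      have hdwA : distToSet G w A ≤ m - 1 := le_trans (hle w a ha) hdw
      have hwlt : distToSet G w A ≤ 2 := by
        by_contra hw3
        push_neg at hw3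
        have : m ≤ distToSet G w A := Nat.sInf_le ⟨by omega, w, rfl⟩
        omega
      -- lower bound: distToSet v ≤ distToSet w + 1
      have htri : distToSet G v A ≤ distToSet G w A + 1 := by
        obtain ⟨b, hb, hdb⟩ := hex w
        have h1 : G.dist v b ≤ G.dist v w + G.dist w b := hconn.dist_triangle
        have h2 : G.dist v w = 1 := SimpleGraph.dist_eq_one_iff_adj.mpr hadj
        have := hle v b hb
        omega
      have hw2 : 2 ≤ distToSet G w A := by omega
      exact hkey v w hadj (by omega) hw2
  refine ⟨?_, ?_, ?_, ?_, ?_⟩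
  · intro v
    have := hbound v
    subst hB hC
    interval_cases h : distToSet G v A
    · exact Or.inl (hA0 v h)
    · exact Or.inr (Or.inl h)
    · exact Or.inr (Or.inr h)
  · rw [Set.disjoint_left]
    intro v hv hvB
    rw [hB] at hvB
    have := hmemA v hv
    simp only [Set.mem_setOf_eq] at hvB
    omega
  · rw [Set.disjoint_left]
    intro v hv hvC
    rw [hC] at hvC
    have := hmemA v hv
    simp only [Set.mem_setOf_eq] at hvC
    omega
  · rw [Set.disjoint_left]
    intro v hv hvC
    rw [hB] at hv
    rw [hC] at hvC
    simp only [Set.mem_setOf_eq] at hv hvC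
    omega
  · intro u hu v hv hne hadj
    rw [hC] at hu hv
    simp only [Set.mem_setOf_eq] at hu hv
    exact hkey u v hadj (by omega) (by omega)
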